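/- For every fixed y ∈ ℝ, the Fourier transform of the regularized Feynman Gaussian converges as ε → 0⁺: lim_{ε→0⁺} ∫_ℝ e^{−(ε+iπ)x²} e^{2πixy} dx = e^{−iπ/4} · e^{iπy²}. -/
import Mathlib


open MeasureTheory Complex Real

noncomputable def feynG (y : ℝ) (ε : ℝ) : ℂ :=
  (↑π / ((ε : ℂ) + π * I)) ^ (1 / 2 : ℂ) *
    Complex.exp (-(2 * π * y : ℂ) ^ 2 / (4 * ((ε : ℂ) + π * I)))

lemma feynG_cont (y : ℝ) : ContinuousAt (feynG y) 0 := by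
  have h0 : ∀ ε : ℝ, ((ε : ℂ) + π * I) ≠ 0 := by
    intro ε h
    have := congrArg Complex.im h
    simp [Real.pi_ne_zero] at this
  apply ContinuousAt.mul
  · apply ContinuousAt.cpow
    · exact (continuousAt_const.div (by fun_prop) (h0 0))
    · exact continuousAt_const
    · right
      simp only [Complex.ofReal_zero, zero_add]
      rw [div_mul_eq_div_div, Complex.div_I]
      simp [Real.pi_ne_zero]
  · apply Complex.continuous_exp.continuousAt.comp
    exact (continuousAt_const.div (by fun_prop) (by simpa using mul_ne_zero (h0 0) (by norm_num : (4:ℂ) ≠ 0)))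

lemma feynG_zero (y : ℝ) :
    feynG y 0 = Complex.exp (-(π * I) / 4) * Complex.exp (π * I * (y : ℂ) ^ 2) := by
  unfold feynG
  have h1 : (↑π / ((0 : ℝ) + π * I) : ℂ) = -I := by
    push_cast
    rw [zero_add, div_mul_eq_div_div, div_self (by exact_mod_cast Real.pi_ne_zero), Complex.div_I,
      one_mul]
  rw [h1]
  congr 1
  · rw [Complex.cpow_def_of_ne_zero (by simp [Complex.I_ne_zero]),
      Complex.log_neg_I]
    congr 1
    ring
  · congr 1
    push_cast
    have : ((0:ℂ) + ↑π * I) = ↑π * I := by ring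
    rw [this]
    field_simp [Complex.I_ne_zero, (by exact_mod_cast Real.pi_ne_zero : (π:ℂ) ≠ 0)]
    ring_nf
    rw [Complex.I_sq]
    ring

theorem feynman_gaussian_fourier_limit (y : ℝ) :
    Filter.Tendsto
      (fun ε : ℝ =>
        ∫ x : ℝ, Complex.exp (-((ε : ℂ) + Real.pi * Complex.I) * (x : ℂ) ^ 2)
          * Complex.exp (2 * Real.pi * Complex.I * (x : ℂ) * (y : ℂ)))
      (nhdsWithin 0 (Set.Ioi 0))
      (nhds (Complex.exp (-(Real.pi * Complex.I) / 4)
        * Complex.exp (Real.pi * Complex.I * (y : ℂ) ^ 2))) := by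
  have heq : ∀ ε ∈ Set.Ioi (0:ℝ),
      (∫ x : ℝ, Complex.exp (-((ε : ℂ) + π * I) * (x : ℂ) ^ 2)
          * Complex.exp (2 * π * I * (x : ℂ) * (y : ℂ))) = feynG y ε := by
    intro ε hε
    have hb : (0:ℝ) < (((ε : ℂ) + π * I)).re := by simpa using hε
    have := fourierIntegral_gaussian hb (2 * π * y : ℂ)
    unfold feynG
    rw [← this]
    congr 1
    ext x
    rw [mul_comm]
    congr 1
    ring
  have := (feynG_cont y).tendsto
  rw [feynG_zero y] at this
  refine Filter.Tendsto.congr' ?_ (this.mono_left nhdsWithin_le_nhds)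
  filter_upwards [self_mem_nhdsWithin] with ε hε
  exact (heq ε hε).symm
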